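/- arXiv:1010.2857 — 5 statements merged into one kernel-verified Lean document; each statement's English description precedes it below -/
import Mathlib

section
/- For every positive integer k and every m ≥ 1, in the continuous box game with resets rCBox(m), the second player (CBoxBreaker) has a strategy ensuring that at every point during the first k rounds, every box has weight at most 1 + log(m + k). -/
noncomputable def amaxFn {m : ℕ} (hm : 1 ≤ m) (f : Fin m → ℝ) : Fin m :=
  have : Nonempty (Fin m) := ⟨⟨0, hm⟩⟩
  Classical.choose (Finite.exists_max f)

lemma amaxFn_spec {m : ℕ} (hm : 1 ≤ m) (f : Fin m → ℝ) :
    ∀ i, f i ≤ f (amaxFn hm f) := by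
  have : Nonempty (Fin m) := ⟨⟨0, hm⟩⟩
  exact Classical.choose_spec (Finite.exists_max f)

noncomputable def stepF {m : ℕ} (hm : 1 ≤ m) (w d : Fin m → ℝ) : Fin m → ℝ :=
  Function.update (fun i => w i + d i) (amaxFn hm (fun i => w i + d i)) 0

noncomputable def wOf {m : ℕ} (hm : 1 ≤ m) (L : List (Fin m → ℝ)) : Fin m → ℝ :=
  L.foldl (stepF hm) 0

noncomputable def resetF {m : ℕ} (hm : 1 ≤ m) (L : List (Fin m → ℝ)) : Fin m :=
  amaxFn hm (fun i => wOf hm L.dropLast i + (L.getLastD 0) i)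

lemma exp_step {a d M : ℝ} (hd : 0 ≤ d) (hM : Real.exp (a + d) ≤ Real.exp M) :
    Real.exp (a + d) ≤ Real.exp a + d * Real.exp M := by
  have h1 : (1 - d) * Real.exp d ≤ 1 := by
    have := Real.add_one_le_exp (-d)
    have h2 : Real.exp (-d) * Real.exp d = 1 := by
      rw [← Real.exp_add]; simp
    nlinarith [Real.exp_pos d]
  have h3 : Real.exp (a + d) = Real.exp a * Real.exp d := Real.exp_add a d
  nlinarith [Real.exp_pos a, Real.exp_pos d]

/-- In the continuous box game with resets `rCBox(m)` on `m ≥ 1`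
boxes, CBoxBreaker has a strategy (a function of the history of CBoxMaker's
weight distributions, choosing which box to reset) ensuring that at every point
during the first `k` rounds every box has weight at most `1 + log(m + k)`.
Here `w j` are the weights at the start of round `j+1` (with `w 0 = 0`),
`w j i + δ j i` is the weight of box `i` after CBoxMaker's move in round `j+1`,
and CBoxBreaker then resets the box chosen by his strategy to weight `0`. -/
theorem stmt_5 (m k : ℕ) (hm : 1 ≤ m) (hk : 1 ≤ k) :
    ∃ reset : List (Fin m → ℝ) → Fin m,
      ∀ (δ : ℕ → Fin m → ℝ) (w : ℕ → Fin m → ℝ),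
        (∀ j i, 0 ≤ δ j i) →
        (∀ j, ∑ i, δ j i = 1) →
        (∀ i, w 0 i = 0) →
        (∀ j, w (j + 1) =
          Function.update (fun i => w j i + δ j i)
            (reset ((List.range (j + 1)).map δ)) 0) →
        ∀ j < k, (∀ i, w j i + δ j i ≤ 1 + Real.log (m + k)) ∧
          (∀ i, w (j + 1) i ≤ 1 + Real.log (m + k)) := by
  refine ⟨resetF hm, ?_⟩
  intro δ w hδ hsum hw0 hrec
  -- identify reset choices with argmax of current weights
  have hlist : ∀ j : ℕ, (List.range (j + 1)).map δ
      = (List.range j).map δ ++ [δ j] := by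
    intro j
    rw [List.range_succ, List.map_append]
    rfl
  have hw : ∀ j : ℕ, w j = wOf hm ((List.range j).map δ) := by
    intro j
    induction j with
    | zero => funext i; simp [wOf, hw0 i]
    | succ j ih =>
      have hdrop : ((List.range (j + 1)).map δ).dropLast = (List.range j).map δ := by
        rw [hlist]; simp
      have hlast : ((List.range (j + 1)).map δ).getLastD 0 = δ j := by
        rw [hlist]; simp
      have hres : resetF hm ((List.range (j + 1)).map δ)
          = amaxFn hm (fun i => w j i + δ j i) := by
        unfold resetF
        rw [hdrop, hlast, ← ih]
      rw [hrec j, hres, hlist, wOf, List.foldl_append]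
      simp only [List.foldl_cons, List.foldl_nil]
      rw [← wOf, ← ih]
      rfl
  have hres : ∀ j : ℕ, resetF hm ((List.range (j + 1)).map δ)
      = amaxFn hm (fun i => w j i + δ j i) := by
    intro j
    have hdrop : ((List.range (j + 1)).map δ).dropLast = (List.range j).map δ := by
      rw [hlist]; simp
    have hlast : ((List.range (j + 1)).map δ).getLastD 0 = δ j := by
      rw [hlist]; simp
    unfold resetF
    rw [hdrop, hlast, ← hw]
  -- potential bound
  have hΦ : ∀ j : ℕ, ∑ i, Real.exp (w j i) ≤ m + j := by
    intro j
    induction j with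
    | zero =>
      simp only [hw0, Real.exp_zero, Nat.cast_zero, add_zero]
      simp
    | succ j ih =>
      set f : Fin m → ℝ := fun i => w j i + δ j i with hf
      set M := amaxFn hm f with hM
      have hrecj : w (j + 1) = Function.update f M 0 := by
        rw [hrec j, hres j]
      have hsplit : ∑ i, Real.exp (w (j + 1) i)
          = (∑ i ∈ Finset.univ.erase M, Real.exp (f i)) + 1 := by
        rw [hrecj, ← Finset.sum_erase_add _ _ (Finset.mem_univ M)]
        congr 1
        · exact Finset.sum_congr rfl fun i hi => by
            rw [Function.update_of_ne (Finset.ne_of_mem_erase hi)]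
        · simp
      have herase : ∑ i ∈ Finset.univ.erase M, Real.exp (f i)
          = (∑ i, Real.exp (f i)) - Real.exp (f M) :=
        Finset.sum_erase_eq_sub (Finset.mem_univ M)
      have hterm : ∀ i, Real.exp (f i) ≤ Real.exp (w j i) + δ j i * Real.exp (f M) := by
        intro i
        exact exp_step (hδ j i) (Real.exp_le_exp.mpr (amaxFn_spec hm f i))
      have hsum2 : ∑ i, Real.exp (f i)
          ≤ (∑ i, Real.exp (w j i)) + Real.exp (f M) := by
        calc ∑ i, Real.exp (f i)
            ≤ ∑ i, (Real.exp (w j i) + δ j i * Real.exp (f M)) :=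
              Finset.sum_le_sum fun i _ => hterm i
          _ = (∑ i, Real.exp (w j i)) + (∑ i, δ j i) * Real.exp (f M) := by
              rw [Finset.sum_add_distrib, Finset.sum_mul]
          _ = (∑ i, Real.exp (w j i)) + Real.exp (f M) := by rw [hsum j]; ring
      rw [hsplit, herase]
      push_cast
      linarith
  -- conclude
  intro j hj
  have hmk2 : (2 : ℝ) ≤ (m : ℝ) + k := by
    have : (2 : ℕ) ≤ m + k := by omega
    exact_mod_cast this
  have hlog0 : 0 ≤ Real.log ((m : ℝ) + k) := Real.log_nonneg (by linarith)
  have hwb : ∀ i, w j i ≤ Real.log ((m : ℝ) + k) := by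
    intro i
    have h1 : Real.exp (w j i) ≤ ∑ i', Real.exp (w j i') :=
      Finset.single_le_sum (fun i' _ => (Real.exp_pos _).le) (Finset.mem_univ i)
    have h2 : Real.exp (w j i) ≤ (m : ℝ) + k := by
      have := hΦ j
      have hcast : (m : ℝ) + j ≤ (m : ℝ) + k := by
        have : (j : ℝ) ≤ k := by exact_mod_cast hj.le
        linarith
      linarith
    have := Real.log_le_log (Real.exp_pos _) h2
    rwa [Real.log_exp] at this
  have hδ1 : ∀ i, δ j i ≤ 1 := by
    intro i
    rw [← hsum j]
    exact Finset.single_le_sum (fun i' _ => hδ j i') (Finset.mem_univ i)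
  have hpart1 : ∀ i, w j i + δ j i ≤ 1 + Real.log ((m : ℝ) + k) := by
    intro i
    have := hwb i
    have := hδ1 i
    linarith
  refine ⟨hpart1, ?_⟩
  intro i
  rw [hrec j]
  rcases eq_or_ne i (resetF hm ((List.range (j + 1)).map δ)) with h | h
  · rw [h, Function.update_self]
    linarith
  · rw [Function.update_of_ne h]
    exact hpart1 i
end

section
/- Let m ≥ 1 and let w : Fin m → ℝ be weights with wᵢ ≥ 0 for all i. Suppose weights are updated to wᵢ' = wᵢ + δᵢ (δᵢ ≥ 0, Σδᵢ = 1), and then one index j achieving the maximum of w' is reset to 0. Then the resulting potential Σᵢ e^{w''ᵢ} (where w''_j = 0 and w''ᵢ = w'ᵢ for i ≠ j) exceeds the original potential Σᵢ e^{wᵢ} by at most 1. -/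
/-- Nonnegative weights `w i` are increased by `δ i ≥ 0` with
`∑ δ i = 1`, and then an index `j` of maximal updated weight is reset to `0`.
The resulting potential exceeds the original potential by at most 1. -/
theorem stmt_7 (m : ℕ) (hm : 1 ≤ m) (w δ : Fin m → ℝ)
    (hw : ∀ i, 0 ≤ w i) (hδ : ∀ i, 0 ≤ δ i) (hsum : ∑ i, δ i = 1)
    (j : Fin m) (hj : ∀ i, w i + δ i ≤ w j + δ j) :
    ∑ i, Real.exp (Function.update (fun i => w i + δ i) j 0 i) ≤
      (∑ i, Real.exp (w i)) + 1 := by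
  have hexp1 : ∀ x : ℝ, Real.exp x - 1 ≤ x * Real.exp x := by
    intro x
    have h := Real.add_one_le_exp (-x)
    have : (1 - x) * Real.exp x ≤ 1 := by
      have := mul_le_mul_of_nonneg_right h (Real.exp_nonneg x)
      rw [← Real.exp_add, neg_add_cancel, Real.exp_zero] at this
      linarith
    nlinarith
  have key : ∀ i, Real.exp (w i + δ i) - Real.exp (w i) ≤
      δ i * Real.exp (w j + δ j) := by
    intro i
    have h1 : Real.exp (w i + δ i) - Real.exp (w i)
        = Real.exp (w i) * (Real.exp (δ i) - 1) := by
      rw [Real.exp_add]; ring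
    have h2 : Real.exp (w i) * (Real.exp (δ i) - 1) ≤
        Real.exp (w i) * (δ i * Real.exp (δ i)) :=
      mul_le_mul_of_nonneg_left (hexp1 (δ i)) (Real.exp_nonneg _)
    have h3 : Real.exp (w i) * (δ i * Real.exp (δ i))
        = δ i * Real.exp (w i + δ i) := by rw [Real.exp_add]; ring
    have h4 : δ i * Real.exp (w i + δ i) ≤ δ i * Real.exp (w j + δ j) :=
      mul_le_mul_of_nonneg_left (Real.exp_le_exp.2 (hj i)) (hδ i)
    linarith
  have hsumle : ∑ i, Real.exp (w i + δ i) ≤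
      (∑ i, Real.exp (w i)) + Real.exp (w j + δ j) := by
    have := Finset.sum_le_sum (s := Finset.univ) (fun i _ => key i)
    rw [Finset.sum_sub_distrib, ← Finset.sum_mul, hsum, one_mul] at this
    linarith
  have hsplit : ∑ i, Real.exp (Function.update (fun i => w i + δ i) j 0 i)
      = (∑ i, Real.exp (w i + δ i)) - Real.exp (w j + δ j) + 1 := by
    rw [Finset.sum_eq_add_sum_sdiff_singleton_of_mem (Finset.mem_univ j)
          (fun i => Real.exp (Function.update (fun i => w i + δ i) j 0 i)),
        Finset.sum_eq_add_sum_sdiff_singleton_of_mem (Finset.mem_univ j)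
          (fun i => Real.exp (w i + δ i))]
    have hc : ∑ i ∈ Finset.univ \ {j},
        Real.exp (Function.update (fun i => w i + δ i) j 0 i)
        = ∑ i ∈ Finset.univ \ {j}, Real.exp (w i + δ i) := by
      refine Finset.sum_congr rfl fun i hi => ?_
      have hne : i ≠ j := by simpa using (Finset.mem_sdiff.1 hi).2
      rw [Function.update_of_ne hne]
    rw [hc, Function.update_self, Real.exp_zero]
    ring
  rw [hsplit]
  linarith
end

section
/- Let r be sufficiently large, q ≤ r/(12·log₂ r), and g(r) = o(r). Then Σ_{t=1}^{r} C(r,t)·C(r, r-t+1)·2^{-(t(r-t+1) - g(r)·min(t, r-t+1))/q} = o(1) as r → ∞. In particular, this sum is strictly less than 1/2 for sufficiently large r. -/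
open Filter

lemma stmt10_choose_bound (r t : ℕ) (h1 : 1 ≤ t) (h2 : t ≤ r) :
    r.choose t * r.choose (r - t + 1) ≤ r ^ (2 * min t (r - t + 1)) := by
  have hr1 : 1 ≤ r := h1.trans h2
  rcases le_or_gt t (r - t + 1) with h | h
  · have hsym : r.choose (r - t + 1) = r.choose (t - 1) := by
      rw [show t - 1 = r - (r - t + 1) by omega, Nat.choose_symm (by omega)]
    calc r.choose t * r.choose (r - t + 1)
        = r.choose t * r.choose (t - 1) := by rw [hsym]
      _ ≤ r ^ t * r ^ (t - 1) :=
          Nat.mul_le_mul (Nat.choose_le_pow r t) (Nat.choose_le_pow r (t - 1))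
      _ = r ^ (t + (t - 1)) := (pow_add r t (t - 1)).symm
      _ ≤ r ^ (2 * min t (r - t + 1)) := Nat.pow_le_pow_right hr1 (by omega)
  · have hsym : r.choose t = r.choose (r - t) := (Nat.choose_symm h2).symm
    calc r.choose t * r.choose (r - t + 1)
        = r.choose (r - t) * r.choose (r - t + 1) := by rw [hsym]
      _ ≤ r ^ (r - t) * r ^ (r - t + 1) :=
          Nat.mul_le_mul (Nat.choose_le_pow r (r - t)) (Nat.choose_le_pow r (r - t + 1))
      _ = r ^ ((r - t) + (r - t + 1)) := (pow_add r (r - t) (r - t + 1)).symm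
      _ ≤ r ^ (2 * min t (r - t + 1)) := Nat.pow_le_pow_right hr1 (by omega)

set_option maxHeartbeats 1000000 in
/-- Per-term bound: each summand is at most `r⁻²` for suitable `r`, `t`. -/
lemma stmt10_term_bound (g q : ℕ → ℝ) (r t : ℕ) (hr2 : 2 ≤ r)
    (hq0 : 0 < q r) (hqle : q r ≤ (r : ℝ) / (12 * Real.logb 2 r))
    (hgle : g r ≤ (r : ℝ) / 6) (ht1 : 1 ≤ t) (ht2 : t ≤ r) :
    (r.choose t : ℝ) * (r.choose (r - t + 1) : ℝ) *
      (2 : ℝ) ^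
        (-(((t : ℝ) * ((r : ℝ) - t + 1) -
            g r * min (t : ℝ) ((r : ℝ) - t + 1)) / q r)) ≤ ((r : ℝ) ^ 2)⁻¹ := by
  have hrR2 : (2:ℝ) ≤ (r:ℝ) := by exact_mod_cast hr2
  have hr0' : (0:ℝ) < (r:ℝ) := by linarith
  have hr1' : (1:ℝ) ≤ (r:ℝ) := by linarith
  have hL : 0 < Real.logb 2 r := Real.logb_pos (by norm_num) (by linarith)
  have htR : (t:ℝ) ≤ (r:ℝ) := by exact_mod_cast ht2
  have ht1R : (1:ℝ) ≤ (t:ℝ) := by exact_mod_cast ht1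
  set M : ℕ := min t (r - t + 1) with hMdef
  have hM1 : 1 ≤ M := le_min ht1 (by omega)
  have hmcast : min (t:ℝ) ((r:ℝ) - t + 1) = (M:ℝ) := by
    rw [hMdef, Nat.cast_min, Nat.cast_add, Nat.cast_sub ht2, Nat.cast_one]
  rw [hmcast]
  have hm0 : (0:ℝ) ≤ (M:ℝ) := Nat.cast_nonneg M
  have hm1 : (1:ℝ) ≤ (M:ℝ) := by exact_mod_cast hM1
  have hCC : (r.choose t : ℝ) * (r.choose (r - t + 1) : ℝ) ≤ (r:ℝ) ^ (2 * M) := by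
    exact_mod_cast stmt10_choose_bound r t ht1 ht2
  have hprod : (M:ℝ) * ((r:ℝ) + 1) / 2 ≤ (t:ℝ) * ((r:ℝ) - t + 1) := by
    rcases le_total (t:ℝ) ((r:ℝ) - t + 1) with h | h
    · rw [← hmcast, min_eq_left h]; nlinarith
    · rw [← hmcast, min_eq_right h]; nlinarith
  have hE : (M:ℝ) * r / 3 ≤ (t:ℝ) * ((r:ℝ) - t + 1) - g r * M := by
    nlinarith [mul_le_mul_of_nonneg_right hgle hm0]
  have hE0 : (0:ℝ) ≤ (t:ℝ) * ((r:ℝ) - t + 1) - g r * M := by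
    have h0 : (0:ℝ) ≤ (M:ℝ) * r / 3 := by positivity
    linarith
  have hexp : 4 * (M:ℝ) * Real.logb 2 r ≤
      ((t:ℝ) * ((r:ℝ) - t + 1) - g r * M) / q r := by
    have h1 : ((t:ℝ) * ((r:ℝ) - t + 1) - g r * M) / ((r:ℝ) / (12 * Real.logb 2 r)) ≤
        ((t:ℝ) * ((r:ℝ) - t + 1) - g r * M) / q r :=
      div_le_div_of_nonneg_left hE0 hq0 hqle
    have h2 : ((t:ℝ) * ((r:ℝ) - t + 1) - g r * M) / ((r:ℝ) / (12 * Real.logb 2 r)) =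
        ((t:ℝ) * ((r:ℝ) - t + 1) - g r * M) * (12 * Real.logb 2 r) / r := by
      rw [div_div_eq_mul_div]
    have h3 : 4 * (M:ℝ) * Real.logb 2 r ≤
        ((t:ℝ) * ((r:ℝ) - t + 1) - g r * M) * (12 * Real.logb 2 r) / r := by
      rw [le_div_iff₀ hr0']
      have h4 := mul_le_mul_of_nonneg_right hE
        (by positivity : (0:ℝ) ≤ 12 * Real.logb 2 r)
      nlinarith
    linarith [h2 ▸ h1]
  have hstep : (2:ℝ) ^
        (-(((t:ℝ) * ((r:ℝ) - t + 1) - g r * M) / q r)) ≤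
      (r:ℝ) ^ (-(4 * (M:ℝ))) := by
    have h1 : (2:ℝ) ^ (-(((t:ℝ) * ((r:ℝ) - t + 1) - g r * M) / q r)) ≤
        (2:ℝ) ^ (-(4 * (M:ℝ) * Real.logb 2 r)) :=
      Real.rpow_le_rpow_of_exponent_le one_le_two (neg_le_neg hexp)
    have h2 : (2:ℝ) ^ (-(4 * (M:ℝ) * Real.logb 2 r)) = (r:ℝ) ^ (-(4 * (M:ℝ))) := by
      rw [show -(4 * (M:ℝ) * Real.logb 2 r) = Real.logb 2 r * (-(4 * (M:ℝ))) by ring,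
        Real.rpow_mul (by norm_num : (0:ℝ) ≤ 2),
        Real.rpow_logb (by norm_num) (by norm_num) hr0']
    exact h2 ▸ h1
  calc (r.choose t : ℝ) * (r.choose (r - t + 1) : ℝ) *
      (2:ℝ) ^ (-(((t:ℝ) * ((r:ℝ) - t + 1) - g r * M) / q r))
      ≤ (r:ℝ) ^ (2 * M) * (r:ℝ) ^ (-(4 * (M:ℝ))) :=
        mul_le_mul hCC hstep (by positivity) (by positivity)
    _ = (r:ℝ) ^ ((2 * M : ℕ) : ℝ) * (r:ℝ) ^ (-(4 * (M:ℝ))) := by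
        rw [Real.rpow_natCast]
    _ = (r:ℝ) ^ (((2 * M : ℕ) : ℝ) + -(4 * (M:ℝ))) := (Real.rpow_add hr0' _ _).symm
    _ = (r:ℝ) ^ (-(2 * (M:ℝ))) := by
        congr 1; push_cast; ring
    _ ≤ (r:ℝ) ^ (-(2:ℝ)) := by
        apply Real.rpow_le_rpow_of_exponent_le hr1'
        nlinarith
    _ = ((r:ℝ) ^ 2)⁻¹ := by
        rw [Real.rpow_neg hr0'.le, Real.rpow_two]

/-- If `g(r) = o(r)` and `0 < q r ≤ r / (12 log₂ r)` for large
`r`, then `∑_{t=1}^r C(r,t) C(r,r-t+1) 2^{-(t(r-t+1) - g(r)·min(t,r-t+1))/q r}`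
tends to `0`; in particular it is eventually less than `1/2`. -/
theorem stmt_10 (g q : ℕ → ℝ)
    (hg : g =o[atTop] fun r : ℕ => (r : ℝ))
    (hq : ∀ᶠ r : ℕ in atTop, 0 < q r ∧ q r ≤ (r : ℝ) / (12 * Real.logb 2 r)) :
    Tendsto (fun r : ℕ =>
        ∑ t ∈ Finset.Icc 1 r,
          (r.choose t : ℝ) * (r.choose (r - t + 1) : ℝ) *
            (2 : ℝ) ^
              (-(((t : ℝ) * ((r : ℝ) - t + 1) -
                  g r * min (t : ℝ) ((r : ℝ) - t + 1)) / q r)))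
      atTop (nhds 0) ∧
    ∀ᶠ r : ℕ in atTop,
      (∑ t ∈ Finset.Icc 1 r,
          (r.choose t : ℝ) * (r.choose (r - t + 1) : ℝ) *
            (2 : ℝ) ^
              (-(((t : ℝ) * ((r : ℝ) - t + 1) -
                  g r * min (t : ℝ) ((r : ℝ) - t + 1)) / q r))) < 1 / 2 := by
  have hg6 := hg.def (by norm_num : (0:ℝ) < 1/6)
  have key : ∀ᶠ r : ℕ in atTop,
      0 ≤ (∑ t ∈ Finset.Icc 1 r,
          (r.choose t : ℝ) * (r.choose (r - t + 1) : ℝ) *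
            (2 : ℝ) ^
              (-(((t : ℝ) * ((r : ℝ) - t + 1) -
                  g r * min (t : ℝ) ((r : ℝ) - t + 1)) / q r))) ∧
      (∑ t ∈ Finset.Icc 1 r,
          (r.choose t : ℝ) * (r.choose (r - t + 1) : ℝ) *
            (2 : ℝ) ^
              (-(((t : ℝ) * ((r : ℝ) - t + 1) -
                  g r * min (t : ℝ) ((r : ℝ) - t + 1)) / q r))) ≤ 1 / r := by
    filter_upwards [hq, hg6, eventually_ge_atTop 2] with r hqr hgr hr2
    obtain ⟨hq0, hqle⟩ := hqr
    have hr0' : (0:ℝ) < (r:ℝ) := by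
      have : (2:ℝ) ≤ (r:ℝ) := by exact_mod_cast hr2
      linarith
    refine ⟨Finset.sum_nonneg fun t ht => by positivity, ?_⟩
    have hgle : g r ≤ (r:ℝ) / 6 := by
      have h1 : |g r| ≤ 1/6 * |(r:ℝ)| := by
        simpa [Real.norm_eq_abs] using hgr
      rw [abs_of_nonneg hr0'.le] at h1
      calc g r ≤ |g r| := le_abs_self _
        _ ≤ 1/6 * r := h1
        _ = (r:ℝ)/6 := by ring
    calc (∑ t ∈ Finset.Icc 1 r,
        (r.choose t : ℝ) * (r.choose (r - t + 1) : ℝ) *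
          (2 : ℝ) ^
            (-(((t : ℝ) * ((r : ℝ) - t + 1) -
                g r * min (t : ℝ) ((r : ℝ) - t + 1)) / q r)))
        ≤ (Finset.Icc 1 r).card • ((r:ℝ)^2)⁻¹ := by
          apply Finset.sum_le_card_nsmul
          intro t ht
          rw [Finset.mem_Icc] at ht
          exact stmt10_term_bound g q r t hr2 hq0 hqle hgle ht.1 ht.2
      _ = (r:ℝ) * ((r:ℝ)^2)⁻¹ := by
          rw [Nat.card_Icc]
          simp [nsmul_eq_mul]
      _ = 1 / r := by
          field_simp
  have hT : Tendsto (fun r : ℕ =>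
        ∑ t ∈ Finset.Icc 1 r,
          (r.choose t : ℝ) * (r.choose (r - t + 1) : ℝ) *
            (2 : ℝ) ^
              (-(((t : ℝ) * ((r : ℝ) - t + 1) -
                  g r * min (t : ℝ) ((r : ℝ) - t + 1)) / q r)))
      atTop (nhds 0) := by
    apply squeeze_zero' (key.mono fun r h => h.1) (key.mono fun r h => h.2)
    exact tendsto_one_div_atTop_nhds_zero_nat
  exact ⟨hT, hT.eventually (gt_mem_nhds (by norm_num : (0:ℝ) < 1/2))⟩
end

section
/- For sufficiently large k and q ≤ k/(log k)², we have Σ_{a=1}^{k/log k} C(k,a)·C(k, k-(D+1)a)·2^{-(1-o(1))·a·k/q} = o(1), where D = log log k. -/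
open Filter

set_option maxHeartbeats 800000 in
private lemma stmt11_key (k : ℕ) (qk ck : ℝ) (hq0 : 0 < qk)
    (hqle : qk ≤ (k : ℝ) / (Real.log k) ^ 2) (hck : |ck| ≤ 1/10)
    (hD : Real.log (Real.log k) ≤ 0.1 * Real.log k)
    (hL : 40 ≤ Real.log k) (hk : 3 ≤ k) :
    ∑ a ∈ Finset.Icc 1 ⌊(k : ℝ) / Real.log k⌋₊,
          (k.choose a : ℝ) *
            (k.choose (k - ⌊(Real.log (Real.log k) + 1) * (a : ℝ)⌋₊) : ℝ) *
            (2 : ℝ) ^ (-((1 - ck) * (a : ℝ) * (k : ℝ) / qk)) ≤ ((k : ℝ))⁻¹ := by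
  have hkpos : (0 : ℝ) < k := by
    have : (0:ℕ) < k := by omega
    exact_mod_cast this
  set L := Real.log k with hLdef
  set D := Real.log L with hDdef
  have hDpos : 0 ≤ D := Real.log_nonneg (by linarith)
  have hexpL : Real.exp L = k := Real.exp_log hkpos
  have hck' : (0.9:ℝ) ≤ 1 - ck := by
    rcases abs_le.mp hck with ⟨h1, h2⟩; linarith
  have hkq : L ^ 2 ≤ (k : ℝ) / qk := by
    rw [le_div_iff₀ hq0]
    have h1 : qk * L ^ 2 ≤ (k : ℝ) := by
      have := (le_div_iff₀ (by positivity : (0:ℝ) < L ^ 2)).mp hqle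
      linarith
    linarith
  have hlog2 : (0.69 : ℝ) ≤ Real.log 2 := by
    have := Real.log_two_gt_d9; linarith
  -- per-term bound
  have hterm : ∀ a ∈ Finset.Icc 1 ⌊(k : ℝ) / L⌋₊,
      (k.choose a : ℝ) * (k.choose (k - ⌊(D + 1) * (a : ℝ)⌋₊) : ℝ) *
        (2 : ℝ) ^ (-((1 - ck) * (a : ℝ) * (k : ℝ) / qk)) ≤ Real.exp (-(2 * L)) := by
    intro a ha
    obtain ⟨ha1, -⟩ := Finset.mem_Icc.mp ha
    have ha1' : (1 : ℝ) ≤ a := by exact_mod_cast ha1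
    set m := ⌊(D + 1) * (a : ℝ)⌋₊ with hmdef
    have hm : (m : ℝ) ≤ (D + 1) * a := Nat.floor_le (by positivity)
    have c1 : (k.choose a : ℝ) ≤ Real.exp ((a : ℝ) * L) := by
      have h1 : (k.choose a : ℝ) ≤ (k : ℝ) ^ a := by
        exact_mod_cast Nat.cast_le.mpr (Nat.choose_le_pow k a)
      have h2 : ((k : ℝ)) ^ a = Real.exp ((a : ℝ) * L) := by
        rw [← hexpL, ← Real.exp_nat_mul]
      linarith [h1, h2.ge, h2.le]
    have c2 : (k.choose (k - m) : ℝ) ≤ Real.exp ((D + 1) * (a : ℝ) * L) := by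
      have h1 : (k.choose (k - m) : ℝ) ≤ (k : ℝ) ^ m := by
        rcases le_or_gt m k with hmk | hmk
        · rw [Nat.choose_symm hmk]
          exact_mod_cast Nat.cast_le.mpr (Nat.choose_le_pow k m)
        · have : k - m = 0 := by omega
          rw [this, Nat.choose_zero_right]
          exact_mod_cast Nat.one_le_cast.mpr (Nat.one_le_pow m k (by omega))
      have h2 : ((k : ℝ)) ^ m = Real.exp ((m : ℝ) * L) := by
        rw [← hexpL, ← Real.exp_nat_mul]
      have h3 : Real.exp ((m : ℝ) * L) ≤ Real.exp ((D + 1) * (a : ℝ) * L) := by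
        apply Real.exp_le_exp.mpr
        apply mul_le_mul_of_nonneg_right hm (by linarith)
      calc (k.choose (k - m) : ℝ) ≤ (k : ℝ) ^ m := h1
        _ = Real.exp ((m : ℝ) * L) := h2
        _ ≤ _ := h3
    have c3 : (2 : ℝ) ^ (-((1 - ck) * (a : ℝ) * (k : ℝ) / qk)) ≤
        Real.exp (-(0.6 * (a : ℝ) * L ^ 2)) := by
      rw [Real.rpow_def_of_pos (by norm_num : (0:ℝ) < 2)]
      apply Real.exp_le_exp.mpr
      have hx : (1 - ck) * (a : ℝ) * (k : ℝ) / qk = (1 - ck) * (a : ℝ) * ((k : ℝ) / qk) := by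
        ring
      rw [hx]
      have hLsq : (0:ℝ) ≤ L ^ 2 := by positivity
      have hkq0 : (0:ℝ) ≤ (k : ℝ) / qk := le_trans hLsq hkq
      have hX0 : (0:ℝ) ≤ (1 - ck) * (a : ℝ) * ((k : ℝ) / qk) :=
        mul_nonneg (mul_nonneg (by linarith) (by linarith)) hkq0
      have h1 : 0.9 * ((a : ℝ) * L ^ 2) ≤ (1 - ck) * ((a : ℝ) * ((k : ℝ) / qk)) :=
        mul_le_mul hck' (mul_le_mul_of_nonneg_left hkq (by linarith))
          (mul_nonneg (by linarith) hLsq) (by linarith)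
      have h2 : 0.69 * ((1 - ck) * (a : ℝ) * ((k : ℝ) / qk)) ≤
          Real.log 2 * ((1 - ck) * (a : ℝ) * ((k : ℝ) / qk)) :=
        mul_le_mul_of_nonneg_right hlog2 hX0
      have h3 : (0:ℝ) ≤ (a : ℝ) * L ^ 2 := mul_nonneg (by linarith) hLsq
      nlinarith [h1, h2, h3]
    have hpos2 : (0:ℝ) ≤ (2 : ℝ) ^ (-((1 - ck) * (a : ℝ) * (k : ℝ) / qk)) :=
      Real.rpow_nonneg (by norm_num) _
    calc (k.choose a : ℝ) * (k.choose (k - m) : ℝ) *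
          (2 : ℝ) ^ (-((1 - ck) * (a : ℝ) * (k : ℝ) / qk))
        ≤ Real.exp ((a : ℝ) * L) * Real.exp ((D + 1) * (a : ℝ) * L) *
          Real.exp (-(0.6 * (a : ℝ) * L ^ 2)) := by
          apply mul_le_mul (mul_le_mul c1 c2 (by positivity) (Real.exp_nonneg _)) c3 hpos2
          positivity
      _ = Real.exp ((a : ℝ) * L + (D + 1) * (a : ℝ) * L + -(0.6 * (a : ℝ) * L ^ 2)) := by
          rw [← Real.exp_add, ← Real.exp_add]
      _ ≤ Real.exp (-(2 * L)) := by
          apply Real.exp_le_exp.mpr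
          have hL0 : (0:ℝ) ≤ L := by linarith
          have e1 : (a:ℝ) * (D*L) ≤ (a:ℝ) * (0.1*L*L) :=
            mul_le_mul_of_nonneg_left (mul_le_mul_of_nonneg_right hD hL0) (by linarith)
          have e0 : (0:ℝ) ≤ L * (0.5*L - 2) := mul_nonneg hL0 (by linarith)
          have e2 : L * (0.5*L - 2) ≤ (a:ℝ) * (L * (0.5*L - 2)) :=
            le_mul_of_one_le_left e0 ha1'
          nlinarith [e1, e2, hL]
  have hN : (⌊(k : ℝ) / L⌋₊ : ℝ) ≤ (k : ℝ) := by
    have h1 : (k : ℝ) / L ≤ (k : ℝ) := by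
      rw [div_le_iff₀ (by linarith : (0:ℝ) < L)]
      nlinarith
    calc (⌊(k : ℝ) / L⌋₊ : ℝ) ≤ (k : ℝ) / L := Nat.floor_le (by positivity)
      _ ≤ (k : ℝ) := h1
  have hsum := Finset.sum_le_card_nsmul _ _ _ hterm
  rw [Nat.card_Icc] at hsum
  have hcard : ((⌊(k : ℝ) / L⌋₊ + 1 - 1 : ℕ) : ℝ) ≤ (k : ℝ) := by
    simpa using hN
  have hexp2 : Real.exp (-(2 * L)) = ((k : ℝ) ^ 2)⁻¹ := by
    rw [show -(2 * L) = -(((2:ℕ) : ℝ) * L) by norm_num, Real.exp_neg, Real.exp_nat_mul, hexpL]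
  calc ∑ a ∈ Finset.Icc 1 ⌊(k : ℝ) / L⌋₊,
        (k.choose a : ℝ) * (k.choose (k - ⌊(D + 1) * (a : ℝ)⌋₊) : ℝ) *
          (2 : ℝ) ^ (-((1 - ck) * (a : ℝ) * (k : ℝ) / qk))
      ≤ (⌊(k : ℝ) / L⌋₊ + 1 - 1 : ℕ) • Real.exp (-(2 * L)) := hsum
    _ = ((⌊(k : ℝ) / L⌋₊ + 1 - 1 : ℕ) : ℝ) * ((k : ℝ) ^ 2)⁻¹ := by
        rw [nsmul_eq_mul, hexp2]
    _ ≤ (k : ℝ) * ((k : ℝ) ^ 2)⁻¹ := by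
        apply mul_le_mul_of_nonneg_right hcard (by positivity)
    _ = ((k : ℝ))⁻¹ := by
        field_simp

/-- For `q k ≤ k / (log k)²` and any `c k = o(1)`, with
`D = log log k`, the sum
`∑_{a=1}^{k/log k} C(k,a) C(k, k-(D+1)a) 2^{-(1 - c k)·a·k / q k}` is `o(1)`. -/
theorem stmt_11 (q c : ℕ → ℝ)
    (hq : ∀ᶠ k : ℕ in atTop, 0 < q k ∧ q k ≤ (k : ℝ) / (Real.log k) ^ 2)
    (hc : Tendsto c atTop (nhds 0)) :
    Tendsto (fun k : ℕ =>
        ∑ a ∈ Finset.Icc 1 ⌊(k : ℝ) / Real.log k⌋₊,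
          (k.choose a : ℝ) *
            (k.choose (k - ⌊(Real.log (Real.log k) + 1) * (a : ℝ)⌋₊) : ℝ) *
            (2 : ℝ) ^ (-((1 - c k) * (a : ℝ) * (k : ℝ) / q k)))
      atTop (nhds 0) := by
  have hlogk : Tendsto (fun k : ℕ => Real.log k) atTop atTop :=
    Real.tendsto_log_atTop.comp tendsto_natCast_atTop_atTop
  have hA : ∀ᶠ k : ℕ in atTop, |c k| ≤ 1/10 := by
    have := NormedAddCommGroup.tendsto_nhds_zero.mp hc (1/10) (by norm_num)
    filter_upwards [this] with k hk
    exact le_of_lt (by simpa [Real.norm_eq_abs] using hk)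
  have hB : ∀ᶠ k : ℕ in atTop, Real.log (Real.log k) ≤ 0.1 * Real.log k := by
    have h1 : ∀ᶠ y : ℝ in atTop, Real.log y ≤ 0.1 * y := by
      have h2 := Real.isLittleO_log_id_atTop.def (by norm_num : (0:ℝ) < 0.1)
      filter_upwards [h2, eventually_ge_atTop (0:ℝ)] with y hy hy0
      have : |Real.log y| ≤ 0.1 * |y| := by
        simpa [Real.norm_eq_abs] using hy
      calc Real.log y ≤ |Real.log y| := le_abs_self _
        _ ≤ 0.1 * |y| := this
        _ = 0.1 * y := by rw [abs_of_nonneg hy0]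
    exact hlogk.eventually h1
  have hC : ∀ᶠ k : ℕ in atTop, (40:ℝ) ≤ Real.log k := hlogk.eventually_ge_atTop 40
  have hupper : ∀ᶠ k : ℕ in atTop,
      (fun k : ℕ =>
        ∑ a ∈ Finset.Icc 1 ⌊(k : ℝ) / Real.log k⌋₊,
          (k.choose a : ℝ) *
            (k.choose (k - ⌊(Real.log (Real.log k) + 1) * (a : ℝ)⌋₊) : ℝ) *
            (2 : ℝ) ^ (-((1 - c k) * (a : ℝ) * (k : ℝ) / q k))) k ≤ ((k : ℝ))⁻¹ := by
    filter_upwards [hq, hA, hB, hC, eventually_ge_atTop 3] with k hq' hA' hB' hC' hk3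
    exact stmt11_key k (q k) (c k) hq'.1 hq'.2 hA' hB' hC' hk3
  have hlower : ∀ᶠ k : ℕ in atTop,
      (0 : ℝ) ≤ (fun k : ℕ =>
        ∑ a ∈ Finset.Icc 1 ⌊(k : ℝ) / Real.log k⌋₊,
          (k.choose a : ℝ) *
            (k.choose (k - ⌊(Real.log (Real.log k) + 1) * (a : ℝ)⌋₊) : ℝ) *
            (2 : ℝ) ^ (-((1 - c k) * (a : ℝ) * (k : ℝ) / q k))) k := by
    filter_upwards with k
    apply Finset.sum_nonneg
    intro a _
    have := Real.rpow_nonneg (by norm_num : (0:ℝ) ≤ 2) (-((1 - c k) * (a : ℝ) * (k : ℝ) / q k))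
    positivity
  have hinv : Tendsto (fun k : ℕ => ((k : ℝ))⁻¹) atTop (nhds 0) :=
    tendsto_inv_atTop_zero.comp tendsto_natCast_atTop_atTop
  exact tendsto_of_tendsto_of_tendsto_of_le_of_le' tendsto_const_nhds hinv hlower hupper
end

section
/- Let k be a sufficiently large positive integer and let G be a graph on k vertices with maximum degree at most k^{0.95}. Let ℓ ≥ 1 and let L = {a₁,…,a_ℓ, b₁,…,b_ℓ} be 2ℓ distinct vertices of G. Let k₁,…,k_ℓ be integers with Σᵢ kᵢ = k - 2ℓ and each kᵢ ≥ k^{0.2}. Then there exists a partition V(G) \ L = V₁ ∪ … ∪ V_ℓ such that for each i: |Vᵢ| = kᵢ, and the induced subgraph G[Vᵢ ∪ {aᵢ, bᵢ}] has maximum degree at most 10·kᵢ·k^{-0.05}. -/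
open Finset

variable {α : Type*} [Fintype α] [DecidableEq α] {ι : Type*} [Fintype ι] [DecidableEq ι]

/-- functions with prescribed fiber cardinalities -/
def fiberFun (c : ι → ℕ) : Finset (α → ι) :=
  univ.filter fun f => ∀ j, (univ.filter fun x => f x = j).card = c j

lemma card_filter_comp (π : Equiv.Perm α) (p : α → Prop) [DecidablePred p] :
    (univ.filter fun x => p (π x)).card = (univ.filter fun x => p x).card := by
  apply Finset.card_nbij' (i := fun x => π x) (j := fun x => π.symm x) <;>
    simp [Set.MapsTo, Set.LeftInvOn, Set.RightInvOn, Set.EqOn]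

lemma comp_mem_fiberFun {c : ι → ℕ} {f : α → ι} (hf : f ∈ fiberFun c) (π : Equiv.Perm α) :
    (f ∘ π) ∈ fiberFun (α := α) c := by
  simp only [fiberFun, mem_filter, mem_univ, true_and] at hf ⊢
  intro j
  rw [← hf j]
  exact card_filter_comp π (fun x => f x = j)

set_option linter.unusedSectionVars false

lemma card_FT_eq (c : ι → ℕ) (i : ι) {T T' : Finset α} (h : T.card = T'.card) :
    ((fiberFun c).filter fun f : α → ι => ∀ x ∈ T, f x = i).card =
      ((fiberFun c).filter fun f : α → ι => ∀ x ∈ T', f x = i).card := by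
  classical
  have e : {x // x ∈ T'} ≃ {x // x ∈ T} :=
    Fintype.equivOfCardEq (by simp [Fintype.card_coe, h])
  set π : Equiv.Perm α := e.extendSubtype with hπ
  have hmem : ∀ x, x ∈ T' → π x ∈ T := fun x hx => e.extendSubtype_mem x hx
  have hnmem : ∀ x, x ∉ T' → π x ∉ T := fun x hx => e.extendSubtype_not_mem x hx
  have hiff : ∀ x, x ∈ T' ↔ π x ∈ T := fun x =>
    ⟨hmem x, fun hx => by by_contra hx'; exact hnmem x hx' hx⟩
  apply Finset.card_nbij' (i := fun f => f ∘ π) (j := fun f => f ∘ π.symm)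
  · intro f hf
    simp only [mem_coe, mem_filter] at hf ⊢
    refine ⟨comp_mem_fiberFun hf.1 π, fun x hx => hf.2 _ (hmem x hx)⟩
  · intro f hf
    simp only [mem_coe, mem_filter] at hf ⊢
    refine ⟨comp_mem_fiberFun hf.1 π.symm, fun x hx => hf.2 _ ?_⟩
    rw [hiff]
    simpa using hx
  · intro f _; ext x; simp
  · intro f _; ext x; simp

lemma sum_FT (c : ι → ℕ) (i : ι) (t : ℕ) :
    ∑ T ∈ (univ : Finset α).powersetCard t,
        ((fiberFun c).filter fun f : α → ι => ∀ x ∈ T, f x = i).card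
      = (fiberFun (α := α) c).card * (c i).choose t := by
  classical
  have key : ∀ f ∈ fiberFun (α := α) c,
      (((univ : Finset α).powersetCard t).filter fun T => ∀ x ∈ T, f x = i).card
        = (c i).choose t := by
    intro f hf
    have : (((univ : Finset α).powersetCard t).filter fun T => ∀ x ∈ T, f x = i)
        = (univ.filter fun x => f x = i).powersetCard t := by
      ext T
      simp only [mem_filter, mem_powersetCard, subset_univ, true_and, subset_iff, mem_univ,
        and_comm]
      tauto
    rw [this, card_powersetCard]
    simp only [fiberFun, mem_filter] at hf
    rw [hf.2 i]
  calc ∑ T ∈ (univ : Finset α).powersetCard t,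
        ((fiberFun c).filter fun f : α → ι => ∀ x ∈ T, f x = i).card
      = ∑ T ∈ (univ : Finset α).powersetCard t, ∑ f ∈ fiberFun (α := α) c,
          (if ∀ x ∈ T, f x = i then 1 else 0) :=
        Finset.sum_congr rfl fun T _ => Finset.card_filter _ _
    _ = ∑ f ∈ fiberFun (α := α) c, ∑ T ∈ (univ : Finset α).powersetCard t,
          (if ∀ x ∈ T, f x = i then 1 else 0) := Finset.sum_comm
    _ = ∑ f ∈ fiberFun (α := α) c, (c i).choose t := by
        refine Finset.sum_congr rfl fun f hf => ?_
        rw [← Finset.card_filter, key f hf]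
    _ = (fiberFun (α := α) c).card * (c i).choose t := by rw [Finset.sum_const, smul_eq_mul]

lemma card_FT (c : ι → ℕ) (i : ι) {T : Finset α} {t : ℕ} (hT : T.card = t) :
    ((fiberFun c).filter fun f : α → ι => ∀ x ∈ T, f x = i).card
        * (Fintype.card α).choose t
      = (fiberFun (α := α) c).card * (c i).choose t := by
  classical
  rw [← sum_FT c i t]
  have : ∀ T' ∈ (univ : Finset α).powersetCard t,
      ((fiberFun c).filter fun f : α → ι => ∀ x ∈ T', f x = i).card
        = ((fiberFun c).filter fun f : α → ι => ∀ x ∈ T, f x = i).card := by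
    intro T' hT'
    exact card_FT_eq c i (by rw [hT, (mem_powersetCard.mp hT').2])
  rw [Finset.sum_congr rfl this, Finset.sum_const, card_powersetCard, card_univ, smul_eq_mul,
    mul_comm]

lemma bad_count (c : ι → ℕ) (i : ι) (M : Finset α) {t : ℕ} (ht : t ≤ Fintype.card α) :
    ((fiberFun c).filter fun f : α → ι =>
          t ≤ (M.filter fun x => f x = i).card).card * (Fintype.card α).choose t
      ≤ M.card.choose t * ((fiberFun (α := α) c).card * (c i).choose t) := by
  classical
  obtain ⟨T₀, -, hT₀⟩ := Finset.exists_subset_card_eq (s := (univ : Finset α)) (by simpa using ht)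
  have hsub : ((fiberFun c).filter fun f : α → ι =>
        t ≤ (M.filter fun x => f x = i).card)
      ⊆ (M.powersetCard t).biUnion fun T =>
          (fiberFun c).filter fun f : α → ι => ∀ x ∈ T, f x = i := by
    intro f hf
    rw [mem_filter] at hf
    obtain ⟨T, hTsub, hTcard⟩ := Finset.exists_subset_card_eq hf.2
    rw [mem_biUnion]
    refine ⟨T, mem_powersetCard.mpr ⟨hTsub.trans (filter_subset _ _), hTcard⟩, ?_⟩
    rw [mem_filter]
    exact ⟨hf.1, fun x hx => (mem_filter.mp (hTsub hx)).2⟩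
  calc ((fiberFun c).filter fun f : α → ι =>
          t ≤ (M.filter fun x => f x = i).card).card * (Fintype.card α).choose t
      ≤ (∑ T ∈ M.powersetCard t,
          ((fiberFun c).filter fun f : α → ι => ∀ x ∈ T, f x = i).card)
            * (Fintype.card α).choose t := by
        exact Nat.mul_le_mul_right _ ((Finset.card_le_card hsub).trans (card_biUnion_le))
    _ = ∑ T ∈ M.powersetCard t,
          (((fiberFun c).filter fun f : α → ι => ∀ x ∈ T, f x = i).card
            * (Fintype.card α).choose t) := by rw [Finset.sum_mul]
    _ = ∑ T ∈ M.powersetCard t, (fiberFun (α := α) c).card * (c i).choose t := by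
        refine Finset.sum_congr rfl fun T hT => ?_
        exact card_FT c i (mem_powersetCard.mp hT).2
    _ = M.card.choose t * ((fiberFun (α := α) c).card * (c i).choose t) := by
        rw [Finset.sum_const, card_powersetCard, smul_eq_mul]

lemma exists_partition {β : Type*} [DecidableEq β] :
    ∀ (m : ℕ) (c : Fin m → ℕ) (s : Finset β), (∑ i, c i) = s.card →
      ∃ P : Fin m → Finset β, (∀ i, P i ⊆ s) ∧
        (∀ i j, i ≠ j → Disjoint (P i) (P j)) ∧
        (Finset.univ.biUnion P = s) ∧ ∀ i, (P i).card = c i := by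
  intro m
  induction m with
  | zero =>
    intro c s hs
    refine ⟨Fin.elim0, fun i => i.elim0, fun i => i.elim0, ?_, fun i => i.elim0⟩
    simp at hs ⊢
    exact (Finset.card_eq_zero.mp hs.symm).symm
  | succ m ih =>
    intro c s hs
    have h0 : c 0 ≤ s.card := by
      rw [← hs]
      exact Finset.single_le_sum (f := c) (fun i _ => Nat.zero_le _) (mem_univ 0)
    obtain ⟨S₀, hS₀s, hS₀c⟩ := Finset.exists_subset_card_eq h0
    have hsum : (∑ i : Fin m, c i.succ) = (s \ S₀).card := by
      rw [Finset.card_sdiff_of_subset hS₀s, ← hs, Fin.sum_univ_succ, hS₀c]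
      omega
    obtain ⟨P', hP's, hP'd, hP'u, hP'c⟩ := ih (fun i => c i.succ) (s \ S₀) hsum
    refine ⟨Fin.cases S₀ P', ?_, ?_, ?_, ?_⟩
    · intro i
      refine Fin.cases ?_ ?_ i
      · simpa using hS₀s
      · intro j; simpa using (hP's j).trans (sdiff_subset)
    · intro i j hij
      obtain rfl | ⟨i', rfl⟩ := Fin.eq_zero_or_eq_succ i <;>
        obtain rfl | ⟨j', rfl⟩ := Fin.eq_zero_or_eq_succ j
      · simp at hij
      · simp only [Fin.cases_zero, Fin.cases_succ]
        exact Finset.disjoint_left.mpr fun x hx hx' =>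
          (Finset.mem_sdiff.mp (hP's _ hx')).2 hx
      · simp only [Fin.cases_zero, Fin.cases_succ]
        exact Finset.disjoint_left.mpr fun x hx hx' =>
          (Finset.mem_sdiff.mp (hP's _ hx)).2 hx'
      · simp only [Fin.cases_succ]
        exact hP'd i' j' (by simpa [Fin.succ_inj] using hij)
    · ext x
      simp only [mem_biUnion, mem_univ, true_and]
      constructor
      · rintro ⟨i, hi⟩
        refine Fin.cases ?_ ?_ i hi
        · intro h; exact hS₀s (by simpa using h)
        · intro j h
          have : x ∈ s \ S₀ := hP's j (by simpa using h)
          exact (Finset.mem_sdiff.mp this).1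
      · intro hx
        by_cases hx0 : x ∈ S₀
        · exact ⟨0, by simpa using hx0⟩
        · have : x ∈ s \ S₀ := Finset.mem_sdiff.mpr ⟨hx, hx0⟩
          rw [← hP'u] at this
          obtain ⟨j, -, hj⟩ := mem_biUnion.mp this
          exact ⟨j.succ, by simpa using hj⟩
    · intro i
      refine Fin.cases ?_ ?_ i
      · simpa using hS₀c
      · intro j; simpa using hP'c j

lemma fiberFun_nonempty {m : ℕ} (hm : 1 ≤ m) (c : Fin m → ℕ)
    (h : (∑ i, c i) = Fintype.card α) : (fiberFun (α := α) c).Nonempty := by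
  classical
  obtain ⟨P, hPs, hPd, hPu, hPc⟩ := exists_partition m c (univ : Finset α)
    (by simpa using h)
  have hx : ∀ x : α, ∃ i, x ∈ P i := by
    intro x
    have : x ∈ Finset.univ.biUnion P := by rw [hPu]; exact mem_univ x
    obtain ⟨i, -, hi⟩ := mem_biUnion.mp this
    exact ⟨i, hi⟩
  choose g hg using hx
  refine ⟨g, ?_⟩
  simp only [fiberFun, mem_filter, mem_univ, true_and]
  intro j
  rw [← hPc j]
  congr 1
  ext x
  simp only [mem_filter, mem_univ, true_and]
  constructor
  · rintro rfl; exact hg x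
  · intro hxj
    by_contra hne
    exact (Finset.disjoint_left.mp (hPd _ _ hne) (hg x)) hxj

lemma third_pow_le_factorial (t : ℕ) : ((t : ℝ) / 3) ^ t ≤ (t.factorial : ℝ) := by
  have h1 : ((t : ℝ)) ^ t / (t.factorial : ℝ) ≤ Real.exp t :=
    Real.pow_div_factorial_le_exp (t:ℝ) (Nat.cast_nonneg t) t
  have h2 : Real.exp (t : ℝ) ≤ 3 ^ t := by
    have : Real.exp ((t : ℕ) * (1 : ℝ)) = Real.exp 1 ^ (t : ℕ) := Real.exp_nat_mul 1 t
    rw [mul_one] at this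
    rw [this]
    exact pow_le_pow_left₀ (Real.exp_pos 1).le
      (le_of_lt (by nlinarith [Real.exp_one_lt_d9])) t
  have h3 : ((t : ℝ)) ^ t ≤ (t.factorial : ℝ) * 3 ^ t := by
    have hfac : (0 : ℝ) < t.factorial := by exact_mod_cast t.factorial_pos
    calc ((t : ℝ)) ^ t = ((t : ℝ)) ^ t / (t.factorial : ℝ) * t.factorial := by
          field_simp
      _ ≤ Real.exp t * t.factorial := by
          exact mul_le_mul_of_nonneg_right h1 hfac.le
      _ ≤ 3 ^ t * t.factorial := mul_le_mul_of_nonneg_right h2 hfac.le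
      _ = (t.factorial : ℝ) * 3 ^ t := mul_comm _ _
  rw [div_pow]
  rw [div_le_iff₀ (by positivity)]
  calc ((t:ℝ))^t ≤ (t.factorial : ℝ) * 3 ^ t := h3
    _ = (t.factorial : ℝ) * (3:ℝ)^t := rfl

lemma c36_eps_lt_one {c : ℝ} (hc : 100 ≤ c) :
    c ^ (36 : ℕ) * ((1 : ℝ) / 2) ^ ((9 : ℝ) * c ^ (3 : ℕ)) < 1 := by
  have hc0 : (0 : ℝ) < c := by linarith
  have hlog2 : (0.6931471803 : ℝ) < Real.log 2 := Real.log_two_gt_d9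
  have hlogc : Real.log c ≤ c - 1 := Real.log_le_sub_one_of_pos hc0
  have h1 : c ^ (36 : ℕ) = Real.exp (36 * Real.log c) := by
    rw [show (36:ℝ) * Real.log c = Real.log (c ^ (36:ℕ)) by
      rw [Real.log_pow]; norm_num, Real.exp_log (by positivity)]
  have h2 : ((1 : ℝ) / 2) ^ ((9 : ℝ) * c ^ (3 : ℕ)) =
      Real.exp (-(Real.log 2) * (9 * c ^ (3 : ℕ))) := by
    rw [Real.rpow_def_of_pos (by norm_num : (0:ℝ) < 1/2)]
    congr 1
    rw [show (1:ℝ)/2 = 2⁻¹ by norm_num, Real.log_inv]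
  rw [h1, h2, ← Real.exp_add]
  rw [show (1:ℝ) = Real.exp 0 by rw [Real.exp_zero]]
  rw [Real.exp_lt_exp]
  have hc3 : 10000 * c ≤ c ^ (3:ℕ) := by
    nlinarith [mul_nonneg (mul_nonneg (sub_nonneg.mpr hc) hc0.le)
      (by linarith : (0:ℝ) ≤ c + 100)]
  nlinarith [hlogc, hlog2, hc3]


lemma bad_filter_card_le {α : Type*} [Fintype α] [DecidableEq α]
    {ι : Type*} [Fintype ι] [DecidableEq ι]
    (c : ι → ℕ) (i : ι) (Mv : Finset α) (T : ℕ) (hT : T ≤ Fintype.card α)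
    (hcore : (Mv.card : ℝ) * (c i : ℝ)
      ≤ ((Fintype.card α + 1 - T : ℕ) : ℝ) * (T : ℝ) / 6) :
    (((fiberFun (α := α) c).filter fun f =>
        T ≤ (Mv.filter fun x => f x = i).card).card : ℝ)
      ≤ ((fiberFun (α := α) c).card : ℝ) * ((1:ℝ)/2) ^ T := by
  classical
  have hcount := bad_count c i Mv hT
  have hchoose_pos : (0:ℝ) < ((Fintype.card α).choose T : ℝ) := by
    exact_mod_cast Nat.choose_pos hT
  have hfacpos : (0:ℝ) < (T.factorial : ℝ) := by exact_mod_cast T.factorial_pos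
  set dd : ℝ := (Mv.card : ℝ) with hdd
  set mm : ℝ := (c i : ℝ) with hmm
  set nn : ℝ := ((Fintype.card α + 1 - T : ℕ) : ℝ) with hnn
  have hdd0 : (0:ℝ) ≤ dd := Nat.cast_nonneg _
  have hmm0 : (0:ℝ) ≤ mm := Nat.cast_nonneg _
  have hnn0 : (0:ℝ) ≤ nn := Nat.cast_nonneg _
  have hd := Nat.choose_le_pow_div (α := ℝ) T Mv.card
  have hm := Nat.choose_le_pow_div (α := ℝ) T (c i)
  have hN := Nat.pow_le_choose (α := ℝ) T (Fintype.card α)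
  have hfact := third_pow_le_factorial T
  have hE : (nn * T / 6) ^ T ≤ (1/2) ^ T * nn ^ T * (T.factorial : ℝ) := by
    have h1 : (nn * T / 6 : ℝ) = 1/2 * nn * ((T:ℝ)/3) := by ring
    rw [h1, mul_pow, mul_pow]
    exact mul_le_mul_of_nonneg_left hfact (by positivity)
  have hstep2 : ((Mv.card.choose T) : ℝ) * ((c i).choose T)
      ≤ ((1:ℝ)/2) ^ T * ((Fintype.card α).choose T) := by
    calc ((Mv.card.choose T) : ℝ) * ((c i).choose T)
        ≤ (dd ^ T / (T.factorial : ℝ)) * (mm ^ T / (T.factorial : ℝ)) := by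
          apply mul_le_mul hd hm (Nat.cast_nonneg _) (by positivity)
      _ = (dd * mm) ^ T / ((T.factorial : ℝ) * (T.factorial : ℝ)) := by
          rw [mul_pow]; ring
      _ ≤ (nn * T / 6) ^ T / ((T.factorial : ℝ) * (T.factorial : ℝ)) := by
          apply div_le_div_of_nonneg_right ?_ (by positivity)
          exact pow_le_pow_left₀ (by positivity) hcore T
      _ ≤ ((1/2) ^ T * nn ^ T * (T.factorial : ℝ))
            / ((T.factorial : ℝ) * (T.factorial : ℝ)) := by
          apply div_le_div_of_nonneg_right hE (by positivity)
      _ = (1/2) ^ T * (nn ^ T / (T.factorial : ℝ)) := by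
          field_simp
      _ ≤ ((1:ℝ)/2) ^ T * ((Fintype.card α).choose T : ℝ) :=
          mul_le_mul_of_nonneg_left hN (by positivity)
  have hstep1 : (((fiberFun (α := α) c).filter fun f =>
        T ≤ (Mv.filter fun x => f x = i).card).card : ℝ)
          * ((Fintype.card α).choose T : ℝ)
      ≤ ((Mv.card.choose T) : ℝ) *
          (((fiberFun (α := α) c).card : ℝ) * ((c i).choose T)) := by
    exact_mod_cast hcount
  have h1 : (((fiberFun (α := α) c).filter fun f =>
        T ≤ (Mv.filter fun x => f x = i).card).card : ℝ)
          * ((Fintype.card α).choose T : ℝ)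
      ≤ (((fiberFun (α := α) c).card : ℝ) * ((1:ℝ)/2) ^ T)
          * ((Fintype.card α).choose T : ℝ) := by
    calc (((fiberFun (α := α) c).filter fun f =>
          T ≤ (Mv.filter fun x => f x = i).card).card : ℝ)
            * ((Fintype.card α).choose T : ℝ)
        ≤ ((Mv.card.choose T) : ℝ) *
            (((fiberFun (α := α) c).card : ℝ) * ((c i).choose T)) := hstep1
      _ = ((fiberFun (α := α) c).card : ℝ) *
            (((Mv.card.choose T) : ℝ) * ((c i).choose T)) := by ring
      _ ≤ ((fiberFun (α := α) c).card : ℝ) *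
            (((1:ℝ)/2) ^ T * ((Fintype.card α).choose T)) :=
          mul_le_mul_of_nonneg_left hstep2 (Nat.cast_nonneg _)
      _ = (((fiberFun (α := α) c).card : ℝ) * ((1:ℝ)/2) ^ T)
            * ((Fintype.card α).choose T : ℝ) := by ring
  exact le_of_mul_le_mul_right h1 hchoose_pos

lemma good_exists {α : Type*} [Fintype α] [DecidableEq α]
    {ι : Type*} [Fintype ι] [DecidableEq ι] {κ : Type*} [Fintype κ] [DecidableEq κ]
    (c : ι → ℕ) (Mv : κ → Finset α) (T : ι → ℕ) (ε : ℝ)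
    (hne : (fiberFun (α := α) c).Nonempty)
    (hsum : (Fintype.card κ : ℝ) * (Fintype.card ι : ℝ) * ε < 1)
    (hkey : ∀ v i, (((fiberFun (α := α) c).filter fun f =>
        T i ≤ ((Mv v).filter fun x => f x = i).card).card : ℝ)
          ≤ ((fiberFun (α := α) c).card : ℝ) * ε) :
    ∃ f ∈ fiberFun (α := α) c, ∀ v i, ((Mv v).filter fun x => f x = i).card < T i := by
  classical
  by_contra hcon
  push_neg at hcon
  have hsub : fiberFun (α := α) c ⊆ (Finset.univ : Finset (κ × ι)).biUnion
      (fun p => (fiberFun (α := α) c).filter fun f =>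
        T p.2 ≤ ((Mv p.1).filter fun x => f x = p.2).card) := by
    intro f hf
    obtain ⟨v, i, hvi⟩ := hcon f hf
    exact Finset.mem_biUnion.mpr ⟨(v, i), Finset.mem_univ _,
      Finset.mem_filter.mpr ⟨hf, hvi⟩⟩
  have hcard := (Finset.card_le_card hsub).trans Finset.card_biUnion_le
  have hFpos : (0:ℝ) < ((fiberFun (α := α) c).card : ℝ) := by
    exact_mod_cast hne.card_pos
  have hreal : ((fiberFun (α := α) c).card : ℝ)
      ≤ ∑ p : κ × ι, ((((fiberFun (α := α) c).filter fun f =>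
          T p.2 ≤ ((Mv p.1).filter fun x => f x = p.2).card).card : ℕ) : ℝ) := by
    rw [← Nat.cast_sum]
    exact_mod_cast hcard
  have hbound : ∑ p : κ × ι, ((((fiberFun (α := α) c).filter fun f =>
        T p.2 ≤ ((Mv p.1).filter fun x => f x = p.2).card).card : ℕ) : ℝ)
      ≤ (Fintype.card κ : ℝ) * (Fintype.card ι : ℝ)
          * (((fiberFun (α := α) c).card : ℝ) * ε) := by
    calc (∑ p : κ × ι, ((((fiberFun (α := α) c).filter fun f =>
          T p.2 ≤ ((Mv p.1).filter fun x => f x = p.2).card).card : ℕ) : ℝ))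
        ≤ ∑ _p : κ × ι, ((fiberFun (α := α) c).card : ℝ) * ε :=
          Finset.sum_le_sum fun p _ => hkey p.1 p.2
      _ = (Fintype.card (κ × ι) : ℝ) * (((fiberFun (α := α) c).card : ℝ) * ε) := by
          rw [Finset.sum_const, Finset.card_univ, nsmul_eq_mul]
      _ = (Fintype.card κ : ℝ) * (Fintype.card ι : ℝ)
            * (((fiberFun (α := α) c).card : ℝ) * ε) := by
          rw [Fintype.card_prod]
          push_cast
          ring
  have hfin : ((fiberFun (α := α) c).card : ℝ)
      < ((fiberFun (α := α) c).card : ℝ) := by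
    calc ((fiberFun (α := α) c).card : ℝ)
        ≤ (Fintype.card κ : ℝ) * (Fintype.card ι : ℝ)
            * (((fiberFun (α := α) c).card : ℝ) * ε) := hreal.trans hbound
      _ = ((fiberFun (α := α) c).card : ℝ)
            * ((Fintype.card κ : ℝ) * (Fintype.card ι : ℝ) * ε) := by ring
      _ < ((fiberFun (α := α) c).card : ℝ) * 1 := by
          apply mul_lt_mul_of_pos_left hsum hFpos
      _ = ((fiberFun (α := α) c).card : ℝ) := mul_one _
  exact absurd hfin (lt_irrefl _)

set_option maxHeartbeats 2000000 in
/-- For sufficiently large `k`: if `G` is a graph on `k`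
vertices with maximum degree at most `k^0.95`, `a₁,…,a_ℓ,b₁,…,b_ℓ` are `2ℓ`
distinct vertices, and `k₁,…,k_ℓ` are integers with `∑ kᵢ = k - 2ℓ` and each
`kᵢ ≥ k^0.2`, then the remaining vertices can be partitioned into sets
`V₁,…,V_ℓ` with `|Vᵢ| = kᵢ` such that every vertex of `Vᵢ ∪ {aᵢ, bᵢ}` has at
most `10·kᵢ·k^{-0.05}` neighbours inside `Vᵢ ∪ {aᵢ, bᵢ}`. -/
theorem stmt_14 :
    ∃ k₀ : ℕ, ∀ k : ℕ, k₀ ≤ k →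
      ∀ (G : SimpleGraph (Fin k)) [DecidableRel G.Adj],
        (∀ v, (G.degree v : ℝ) ≤ (k : ℝ) ^ (0.95 : ℝ)) →
        ∀ ℓ : ℕ, 1 ≤ ℓ →
          ∀ a b : Fin ℓ → Fin k, Function.Injective (Sum.elim a b) →
            ∀ ks : Fin ℓ → ℕ, (∑ i, ks i) = k - 2 * ℓ →
              (∀ i, (k : ℝ) ^ (0.2 : ℝ) ≤ (ks i : ℝ)) →
              ∃ Vs : Fin ℓ → Finset (Fin k),
                (∀ i j, i ≠ j → Disjoint (Vs i) (Vs j)) ∧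
                Finset.univ.biUnion Vs =
                  Finset.univ \ (Finset.univ.image a ∪ Finset.univ.image b) ∧
                (∀ i, (Vs i).card = ks i) ∧
                ∀ i, ∀ v ∈ Vs i ∪ {a i, b i},
                  ((G.neighborFinset v ∩ (Vs i ∪ {a i, b i})).card : ℝ) ≤
                    10 * (ks i : ℝ) * (k : ℝ) ^ (-(0.05 : ℝ)) := by
  classical
  refine ⟨10 ^ 40, ?_⟩
  intro k hk G _ hdeg ℓ hℓ a b hab ks hksum hks
  have hk0 : 0 < k := lt_of_lt_of_le (by norm_num) hk
  have hK0 : (0 : ℝ) < (k : ℝ) := by exact_mod_cast hk0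
  set c : ℝ := (k : ℝ) ^ (0.05 : ℝ) with hcdef
  have hc : (100 : ℝ) ≤ c := by
    have h1 : ((10:ℝ) ^ (40:ℕ)) ^ (0.05:ℝ) = 100 := by
      rw [← Real.rpow_natCast 10 40, ← Real.rpow_mul (by norm_num : (0:ℝ) ≤ 10)]
      norm_num
    calc (100:ℝ) = ((10:ℝ)^(40:ℕ))^(0.05:ℝ) := h1.symm
      _ ≤ c := by
          rw [hcdef]
          refine Real.rpow_le_rpow (by positivity) ?_ (by norm_num)
          exact_mod_cast hk
  have hc0 : (0:ℝ) < c := by linarith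
  have hpow : ∀ m : ℕ, c ^ m = (k:ℝ) ^ ((m : ℝ) * 0.05) := by
    intro m
    rw [hcdef, ← Real.rpow_natCast ((k:ℝ) ^ (0.05:ℝ)) m, ← Real.rpow_mul hK0.le, mul_comm]
  have hc20 : c ^ (20:ℕ) = (k:ℝ) := by
    rw [hpow]; norm_num
  have hc19 : c ^ (19:ℕ) = (k:ℝ) ^ (0.95:ℝ) := by rw [hpow]; norm_num
  have hc4 : c ^ (4:ℕ) = (k:ℝ) ^ (0.2:ℝ) := by rw [hpow]; norm_num
  have hcinv : (k:ℝ) ^ (-(0.05:ℝ)) = c⁻¹ := by rw [Real.rpow_neg hK0.le, hcdef]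
  -- injectivity and the leftover set
  have ha : Function.Injective a := fun i j h => by
    have := hab (show Sum.elim a b (Sum.inl i) = Sum.elim a b (Sum.inl j) from h)
    simpa using this
  have hb : Function.Injective b := fun i j h => by
    have := hab (show Sum.elim a b (Sum.inr i) = Sum.elim a b (Sum.inr j) from h)
    simpa using this
  have hdisj : Disjoint (Finset.univ.image a) (Finset.univ.image b) := by
    rw [Finset.disjoint_left]
    rintro x hx hx'
    obtain ⟨i, -, rfl⟩ := Finset.mem_image.mp hx
    obtain ⟨j, -, hji⟩ := Finset.mem_image.mp hx'
    have := hab (show Sum.elim a b (Sum.inl i) = Sum.elim a b (Sum.inr j) from hji.symm)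
    simp at this
  set L : Finset (Fin k) := Finset.univ.image a ∪ Finset.univ.image b with hLdef
  have hL : L.card = 2 * ℓ := by
    rw [hLdef, Finset.card_union_of_disjoint hdisj, Finset.card_image_of_injective _ ha,
      Finset.card_image_of_injective _ hb, Finset.card_univ, Fintype.card_fin]
    ring
  set W : Finset (Fin k) := Finset.univ \ L with hWdef
  have h2l : 2 * ℓ ≤ k := by
    calc 2*ℓ = L.card := hL.symm
      _ ≤ (Finset.univ : Finset (Fin k)).card := Finset.card_le_card (Finset.subset_univ L)
      _ = k := by rw [Finset.card_univ, Fintype.card_fin]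
  have hW : W.card = k - 2 * ℓ := by
    rw [hWdef, Finset.card_sdiff_of_subset (Finset.subset_univ L), hL, Finset.card_univ, Fintype.card_fin]
  have hcardW : Fintype.card ↥W = k - 2*ℓ := by rw [Fintype.card_coe, hW]
  -- real arithmetic facts
  have hnr : ((k - 2*ℓ : ℕ) : ℝ) = (k:ℝ) - 2*ℓ := by
    push_cast [Nat.cast_sub h2l]
    ring
  have hks4 : ∀ i, c ^ (4:ℕ) ≤ (ks i : ℝ) := fun i => by rw [hc4]; exact hks i
  have hsumr : (∑ i, (ks i : ℝ)) = ((k - 2*ℓ:ℕ):ℝ) := by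
    rw [← hksum]; push_cast; ring
  have hlr : (ℓ:ℝ) * c^(4:ℕ) ≤ c^(20:ℕ) := by
    calc (ℓ:ℝ) * c^(4:ℕ) = ∑ _i : Fin ℓ, c^(4:ℕ) := by
          rw [Finset.sum_const, Finset.card_univ, Fintype.card_fin, nsmul_eq_mul]
      _ ≤ ∑ i, (ks i:ℝ) := Finset.sum_le_sum fun i _ => hks4 i
      _ = ((k-2*ℓ:ℕ):ℝ) := hsumr
      _ ≤ (k:ℝ) := by exact_mod_cast Nat.sub_le _ _
      _ = c^(20:ℕ) := hc20.symm
  have hl16 : (ℓ:ℝ) ≤ c^(16:ℕ) := by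
    have h4 : (0:ℝ) < c^(4:ℕ) := by positivity
    have : (ℓ:ℝ) * c^(4:ℕ) ≤ c^(16:ℕ) * c^(4:ℕ) := by
      rw [← pow_add]
      exact hlr
    exact le_of_mul_le_mul_right this h4
  have hc4' : (20:ℝ) ≤ c^(4:ℕ) := by nlinarith [pow_le_pow_left₀ (by norm_num : (0:ℝ) ≤ 100) hc 4]
  have hn9 : (0.9:ℝ) * c^(20:ℕ) ≤ ((k - 2*ℓ:ℕ):ℝ) := by
    rw [hnr, ← hc20]
    have h1 : (2:ℝ) * (ℓ:ℝ) ≤ 2 * c^(16:ℕ) := by linarith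
    have h2 : (20:ℝ) * c^(16:ℕ) ≤ c^(4:ℕ) * c^(16:ℕ) := by nlinarith [pow_pos hc0 16]
    have h3 : c^(4:ℕ) * c^(16:ℕ) = c^(20:ℕ) := by rw [← pow_add]
    nlinarith
  -- block sizes for the bad events
  have hcinv0 : (0:ℝ) < c⁻¹ := by positivity
  have hcc3 : c^(4:ℕ) * c⁻¹ = c^(3:ℕ) := by
    field_simp
  have hc3' : (1000:ℝ) ≤ c^(3:ℕ) := by
    nlinarith [pow_le_pow_left₀ (by norm_num : (0:ℝ) ≤ 100) hc 3]
  have hksc3 : ∀ i, c^(3:ℕ) ≤ (ks i:ℝ) * c⁻¹ := by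
    intro i
    rw [← hcc3]
    exact mul_le_mul_of_nonneg_right (hks4 i) hcinv0.le
  set t : Fin ℓ → ℕ := fun i => ⌈(10:ℝ) * (ks i) * c⁻¹⌉₊ - 2 with htdef
  have hxpos : ∀ i, (0:ℝ) ≤ 10 * (ks i:ℝ) * c⁻¹ := fun i => by positivity
  have hceil2 : ∀ i, 2 ≤ ⌈(10:ℝ) * (ks i) * c⁻¹⌉₊ := by
    intro i
    have h1 : (2:ℝ) ≤ 10 * (ks i:ℝ) * c⁻¹ := by nlinarith [hksc3 i, hc3']
    have h2 : (2:ℝ) ≤ (⌈(10:ℝ) * (ks i) * c⁻¹⌉₊ : ℝ) := h1.trans (Nat.le_ceil _)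
    exact_mod_cast h2
  have htr : ∀ i, ((t i : ℕ):ℝ) = (⌈(10:ℝ) * (ks i) * c⁻¹⌉₊:ℝ) - 2 := by
    intro i
    rw [htdef]
    push_cast [Nat.cast_sub (hceil2 i)]
    ring
  have hti1 : ∀ i, ((t i:ℕ):ℝ) + 1 ≤ 10 * (ks i:ℝ) * c⁻¹ := by
    intro i
    have := Nat.ceil_lt_add_one (hxpos i)
    rw [htr i]
    linarith
  have hti2 : ∀ i, 9 * (ks i:ℝ) * c⁻¹ ≤ ((t i:ℕ):ℝ) := by
    intro i
    have h1 := Nat.le_ceil ((10:ℝ) * (ks i) * c⁻¹)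
    have h2 := hksc3 i
    rw [htr i]
    nlinarith [hc3']
  have hti3 : ∀ i, 9 * c^(3:ℕ) ≤ ((t i:ℕ):ℝ) := by
    intro i
    have := hksc3 i
    nlinarith [hti2 i]
  have htiks : ∀ i, t i ≤ ks i := by
    intro i
    have h10 : (10:ℝ) * c⁻¹ ≤ 1 := by
      rw [mul_inv_le_iff₀ hc0]
      linarith
    have hx : (10:ℝ) * (ks i) * c⁻¹ ≤ ks i := by
      have : (10:ℝ) * (ks i) * c⁻¹ = (ks i) * (10 * c⁻¹) := by ring
      rw [this]
      exact mul_le_of_le_one_right (Nat.cast_nonneg _) h10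
    have : ((t i:ℕ):ℝ) ≤ (ks i:ℝ) := by
      have := hti1 i
      linarith
    exact_mod_cast this
  have hksn : ∀ i, ks i ≤ k - 2*ℓ := by
    intro i
    rw [← hksum]
    exact Finset.single_le_sum (f := fun j => ks j) (fun j _ => Nat.zero_le _) (Finset.mem_univ i)
  have htin : ∀ i, t i ≤ k - 2*ℓ := fun i => (htiks i).trans (hksn i)
  -- neighbour sets inside W
  set M : Fin k → Finset ↥W := fun v => Finset.univ.filter fun x => G.Adj v ↑x with hMdef
  have hMd : ∀ v, ((M v).card : ℝ) ≤ c^(19:ℕ) := by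
    intro v
    have h1 : (M v).card ≤ G.degree v := by
      rw [← SimpleGraph.card_neighborFinset_eq_degree]
      refine Finset.card_le_card_of_injOn (fun x => (x:Fin k)) ?_ ?_
      · intro x hx
        rw [hMdef] at hx
        simp only [Finset.mem_filter, Finset.mem_univ, true_and] at hx
        simpa [SimpleGraph.mem_neighborFinset] using hx
      · intro x _ y _ h
        exact Subtype.ext h
    calc ((M v).card:ℝ) ≤ G.degree v := by exact_mod_cast h1
      _ ≤ (k:ℝ)^(0.95:ℝ) := hdeg v
      _ = c^(19:ℕ) := hc19.symm
  -- the key probabilistic estimate for each bad event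
  have hcc19 : c^(20:ℕ) * c⁻¹ = c^(19:ℕ) := by
    field_simp
  have hNN : Fintype.card ↥W = k - 2*ℓ := hcardW
  have hksr : ∀ i, (ks i:ℝ) ≤ c^(20:ℕ) := by
    intro i
    have h1 : (ks i:ℝ) ≤ ((k - 2*ℓ:ℕ):ℝ) := by exact_mod_cast hksn i
    have h2 : ((k - 2*ℓ:ℕ):ℝ) ≤ (k:ℝ) := by exact_mod_cast Nat.sub_le _ _
    rw [hc20]
    linarith
  have htup : ∀ i, ((t i:ℕ):ℝ) ≤ (0.1:ℝ) * c^(20:ℕ) := by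
    intro i
    have h1 := hti1 i
    have h2 : (10:ℝ) * (ks i) * c⁻¹ ≤ 10 * c^(20:ℕ) * c⁻¹ := by
      have := hksr i
      nlinarith [hcinv0]
    have h3 : (10:ℝ) * c^(20:ℕ) * c⁻¹ = 10 * c^(19:ℕ) := by
      rw [mul_assoc, hcc19]
    have h4 : (10:ℝ) * c^(19:ℕ) ≤ 0.1 * c^(20:ℕ) := by
      have : (100:ℝ) * c^(19:ℕ) ≤ c * c^(19:ℕ) := by
        nlinarith [pow_pos hc0 19]
      have hcc : c * c^(19:ℕ) = c^(20:ℕ) := by ring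
      nlinarith
    linarith
  have hnn8 : ∀ i, (0.8:ℝ) * c^(20:ℕ) ≤ (((k - 2*ℓ) + 1 - t i : ℕ):ℝ) := by
    intro i
    have hcast : (((k - 2*ℓ) + 1 - t i : ℕ):ℝ) = ((k - 2*ℓ:ℕ):ℝ) + 1 - (t i:ℕ) := by
      have : t i ≤ (k - 2*ℓ) + 1 := (htin i).trans (Nat.le_succ _)
      push_cast [Nat.cast_sub this]
      ring
    rw [hcast]
    have := htup i
    nlinarith [hn9]
  -- the bad-event estimate, packaged
  have hcore : ∀ (v : Fin k) (i : Fin ℓ), ((M v).card : ℝ) * (ks i : ℝ)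
      ≤ ((Fintype.card ↥W + 1 - t i : ℕ) : ℝ) * (t i : ℝ) / 6 := by
    intro v i
    have h2 : (0.8:ℝ) * c^(20:ℕ) * (9 * (ks i:ℝ) * c⁻¹) ≤
        ((Fintype.card ↥W + 1 - t i : ℕ):ℝ) * (t i:ℕ) := by
      apply mul_le_mul
      · rw [hNN]; exact hnn8 i
      · exact hti2 i
      · positivity
      · positivity
    have h3 : (0.8:ℝ) * c^(20:ℕ) * (9 * (ks i:ℝ) * c⁻¹) =
        7.2 * (ks i:ℝ) * (c^(20:ℕ) * c⁻¹) := by ring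
    rw [h3, hcc19] at h2
    have h1 : ((M v).card : ℝ) * (ks i) ≤ c^(19:ℕ) * (ks i) :=
      mul_le_mul_of_nonneg_right (hMd v) (Nat.cast_nonneg _)
    nlinarith [mul_nonneg (pow_pos hc0 19).le
      (Nat.cast_nonneg (ks i) : (0:ℝ) ≤ (ks i:ℝ))]
  have hε0 : (0:ℝ) < ((1:ℝ)/2) ^ ((9:ℝ) * c^(3:ℕ)) :=
    Real.rpow_pos_of_pos (by norm_num) _
  have key : ∀ (v : Fin k) (i : Fin ℓ),
      (((fiberFun (α := ↥W) ks).filter fun f =>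
          t i ≤ ((M v).filter fun x => f x = i).card).card : ℝ)
        ≤ ((fiberFun (α := ↥W) ks).card : ℝ) * ((1:ℝ)/2) ^ ((9:ℝ) * c^(3:ℕ)) := by
    intro v i
    have htiN : t i ≤ Fintype.card ↥W := by rw [hNN]; exact htin i
    refine (bad_filter_card_le ks i (M v) (t i) htiN (hcore v i)).trans ?_
    refine mul_le_mul_of_nonneg_left ?_ (Nat.cast_nonneg _)
    rw [show ((1:ℝ)/2)^(t i) = ((1:ℝ)/2) ^ (((t i : ℕ)):ℝ) from
      (Real.rpow_natCast _ _).symm]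
    exact Real.rpow_le_rpow_of_exponent_ge (by norm_num) (by norm_num) (hti3 i)
  -- the union bound
  have hFne : (fiberFun (α := ↥W) ks).Nonempty :=
    fiberFun_nonempty hℓ ks (by rw [hcardW]; exact hksum)
  have hsumlt : (Fintype.card (Fin k) : ℝ) * (Fintype.card (Fin ℓ) : ℝ)
      * (((1:ℝ)/2) ^ ((9:ℝ) * c^(3:ℕ))) < 1 := by
    rw [Fintype.card_fin, Fintype.card_fin]
    have h1 : (k:ℝ) * (ℓ:ℝ) ≤ c^(20:ℕ) * c^(16:ℕ) := by
      apply mul_le_mul (le_of_eq hc20.symm) hl16 (Nat.cast_nonneg _) (by positivity)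
    have h2 : c^(20:ℕ) * c^(16:ℕ) = c^(36:ℕ) := by rw [← pow_add]
    calc (k:ℝ) * (ℓ:ℝ) * (((1:ℝ)/2) ^ ((9:ℝ) * c^(3:ℕ)))
        ≤ c^(36:ℕ) * (((1:ℝ)/2) ^ ((9:ℝ) * c^(3:ℕ))) := by
          apply mul_le_mul_of_nonneg_right _ hε0.le
          rw [← h2]; exact h1
      _ < 1 := c36_eps_lt_one hc
  obtain ⟨f, hfF, hgood⟩ := good_exists ks M t _ hFne hsumlt key
  -- construct the parts
  set Vs : Fin ℓ → Finset (Fin k) := fun i =>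
    (Finset.univ.filter fun x : ↥W => f x = i).map
      (Function.Embedding.subtype _) with hVsdef
  have hVsmem : ∀ (u : Fin k) (i : Fin ℓ),
      u ∈ Vs i ↔ ∃ hu : u ∈ W, f ⟨u, hu⟩ = i := by
    intro u i
    rw [hVsdef]
    simp only [Finset.mem_map, Finset.mem_filter, Finset.mem_univ, true_and,
      Function.Embedding.coe_subtype]
    constructor
    · rintro ⟨x, hx, rfl⟩
      exact ⟨x.2, by simpa using hx⟩
    · rintro ⟨hu, hfu⟩
      exact ⟨⟨u, hu⟩, hfu, rfl⟩
  have hfib : ∀ j, (Finset.univ.filter fun x : ↥W => f x = j).card = ks j := by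
    have h := hfF
    simp only [fiberFun, Finset.mem_filter, Finset.mem_univ, true_and] at h
    exact h
  refine ⟨Vs, ?_, ?_, ?_, ?_⟩
  · intro i j hij
    rw [Finset.disjoint_left]
    intro u hui huj
    obtain ⟨hu, hfi⟩ := (hVsmem u i).mp hui
    obtain ⟨hu', hfj⟩ := (hVsmem u j).mp huj
    exact hij (hfi ▸ hfj ▸ rfl)
  · ext u
    simp only [Finset.mem_biUnion, Finset.mem_univ, true_and]
    constructor
    · rintro ⟨i, hi⟩
      exact ((hVsmem u i).mp hi).1
    · intro hu
      exact ⟨f ⟨u, hu⟩, (hVsmem u _).mpr ⟨hu, rfl⟩⟩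
  · intro i
    rw [hVsdef]
    simp only [Finset.card_map]
    exact hfib i
  · intro i v hv
    have hcardeq : ((M v).filter fun x => f x = i).card
        = (G.neighborFinset v ∩ Vs i).card := by
      refine Finset.card_bij (fun x _ => (x : Fin k)) ?_ ?_ ?_
      · intro x hx
        rw [Finset.mem_filter, hMdef] at hx
        obtain ⟨hx1, hx2⟩ := hx
        simp only [Finset.mem_filter, Finset.mem_univ, true_and] at hx1
        rw [Finset.mem_inter, SimpleGraph.mem_neighborFinset]
        exact ⟨hx1, (hVsmem _ i).mpr ⟨x.2, by simpa using hx2⟩⟩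
      · intro x _ y _ h
        exact Subtype.ext h
      · intro u hu
        rw [Finset.mem_inter, SimpleGraph.mem_neighborFinset] at hu
        obtain ⟨hadj, huVs⟩ := hu
        obtain ⟨hu', hfu⟩ := (hVsmem u i).mp huVs
        refine ⟨⟨u, hu'⟩, ?_, rfl⟩
        rw [Finset.mem_filter, hMdef]
        exact ⟨by simpa using hadj, hfu⟩
    have hsub2 : G.neighborFinset v ∩ (Vs i ∪ {a i, b i})
        ⊆ (G.neighborFinset v ∩ Vs i) ∪ {a i, b i} := by
      intro u hu
      rw [Finset.mem_inter] at hu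
      rcases Finset.mem_union.mp hu.2 with h | h
      · exact Finset.mem_union_left _ (Finset.mem_inter.mpr ⟨hu.1, h⟩)
      · exact Finset.mem_union_right _ h
    have hpair : ({a i, b i} : Finset (Fin k)).card ≤ 2 := by
      apply le_trans (Finset.card_insert_le _ _)
      simp
    have hlt := hgood v i
    have hcard3 : (G.neighborFinset v ∩ (Vs i ∪ {a i, b i})).card ≤ t i + 1 := by
      calc (G.neighborFinset v ∩ (Vs i ∪ {a i, b i})).card
          ≤ ((G.neighborFinset v ∩ Vs i) ∪ ({a i, b i} : Finset (Fin k))).card :=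
            Finset.card_le_card hsub2
        _ ≤ (G.neighborFinset v ∩ Vs i).card + ({a i, b i} : Finset (Fin k)).card :=
            Finset.card_union_le _ _
        _ ≤ t i + 1 := by
            rw [← hcardeq]
            omega
    have hreal : ((G.neighborFinset v ∩ (Vs i ∪ {a i, b i})).card : ℝ)
        ≤ ((t i : ℕ) : ℝ) + 1 := by
      have : ((G.neighborFinset v ∩ (Vs i ∪ {a i, b i})).card : ℝ)
          ≤ ((t i + 1 : ℕ) : ℝ) := by exact_mod_cast hcard3
      push_cast at this
      linarith
    calc ((G.neighborFinset v ∩ (Vs i ∪ {a i, b i})).card : ℝ)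
        ≤ ((t i : ℕ) : ℝ) + 1 := hreal
      _ ≤ 10 * (ks i : ℝ) * c⁻¹ := hti1 i
      _ = 10 * (ks i : ℝ) * (k:ℝ) ^ (-(0.05:ℝ)) := by rw [hcinv]
end
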